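/- Let p be prime, a, b ∈ {0,...,p-1} with a ≠ b, and m, n ∈ {1,...,p-2} with m < n. Then the sum over k from 0 to p-1, excluding k ≡ -a and k ≡ -b mod p, of (a+k)^m/(b+k)^n is congruent to 0 mod p. -/

import Mathlib

theorem sum_ratio_shifted_zero (p a b m n : ℕ) [Fact p.Prime]
    (ha : a ≤ p - 1) (hb : b ≤ p - 1) (hab : a ≠ b)
    (hm : 1 ≤ m) (hn : n ≤ p - 2) (hmn : m < n) :
    (∑ k ∈ (Finset.range p).filter
        (fun (k : ℕ) => (k : ZMod p) ≠ -(a : ZMod p) ∧ (k : ZMod p) ≠ -(b : ZMod p)),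
        ((a : ZMod p) + (k : ZMod p)) ^ m * (((b : ZMod p) + (k : ZMod p)) ^ n)⁻¹) = 0 := by
  have hp : p.Prime := Fact.out
  have hp2 : 2 ≤ p := hp.two_le
  have hn2 : 2 ≤ n := by omega
  have hp4 : 4 ≤ p := by omega
  set r : ℕ := p - 1 - n with hr
  have hr1 : 1 ≤ r := by omega
  -- step 1: reindex over ZMod p
  have h1 : (∑ k ∈ (Finset.range p).filter
        (fun (k : ℕ) => (k : ZMod p) ≠ -(a : ZMod p) ∧ (k : ZMod p) ≠ -(b : ZMod p)),
        ((a : ZMod p) + (k : ZMod p)) ^ m * (((b : ZMod p) + (k : ZMod p)) ^ n)⁻¹)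
      = ∑ x ∈ Finset.univ.filter
        (fun (x : ZMod p) => x ≠ -(a : ZMod p) ∧ x ≠ -(b : ZMod p)),
        ((a : ZMod p) + x) ^ m * (((b : ZMod p) + x) ^ n)⁻¹ := by
    haveI : NeZero p := ⟨hp.ne_zero⟩
    refine Finset.sum_nbij' (fun k : ℕ => (k : ZMod p)) (fun x : ZMod p => x.val) ?_ ?_ ?_ ?_ ?_
    · intro k hk
      simp only [Finset.mem_filter, Finset.mem_range] at hk
      simp [hk.2.1, hk.2.2]
    · intro x hx
      simp only [Finset.mem_filter, Finset.mem_univ, true_and] at hx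
      simp only [Finset.mem_filter, Finset.mem_range]
      refine ⟨ZMod.val_lt x, ?_, ?_⟩ <;> rw [ZMod.natCast_val, ZMod.cast_id]
      · exact hx.1
      · exact hx.2
    · intro k hk
      simp only [Finset.mem_filter, Finset.mem_range] at hk
      exact ZMod.val_cast_of_lt hk.1
    · intro x hx
      simp [ZMod.natCast_val, ZMod.cast_id]
    · intro k hk; rfl
  rw [h1]
  -- step 2: replace inverse by power, extend to full sum
  have h2 : (∑ x ∈ Finset.univ.filter
        (fun (x : ZMod p) => x ≠ -(a : ZMod p) ∧ x ≠ -(b : ZMod p)),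
        ((a : ZMod p) + x) ^ m * (((b : ZMod p) + x) ^ n)⁻¹)
      = ∑ x : ZMod p, ((a : ZMod p) + x) ^ m * ((b : ZMod p) + x) ^ r := by
    rw [Finset.sum_congr rfl (g := fun x => ((a : ZMod p) + x) ^ m * ((b : ZMod p) + x) ^ r)
      (fun x hx => ?_)]
    · apply Finset.sum_subset (Finset.filter_subset _ _)
      intro x _ hx
      simp only [Finset.mem_filter, Finset.mem_univ, true_and, not_and_or, not_not] at hx
      rcases hx with hx | hx
      · have : (a : ZMod p) + x = 0 := by rw [hx]; ring
        rw [this, zero_pow (by omega), zero_mul]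
      · have : (b : ZMod p) + x = 0 := by rw [hx]; ring
        rw [this, zero_pow (by omega), mul_zero]
    · simp only [Finset.mem_filter, Finset.mem_univ, true_and] at hx
      congr 1
      apply inv_eq_of_mul_eq_one_right
      rw [← pow_add]
      have hnr : n + r = p - 1 := by omega
      rw [hnr]
      apply ZMod.pow_card_sub_one_eq_one
      intro h0
      apply hx.2
      have : x = -(b : ZMod p) + ((b : ZMod p) + x) := by ring
      rw [this, h0, add_zero]
  rw [h2]
  -- step 3: expand and use power sums vanish
  have key : ∀ e : ℕ, e ≤ m + r → ∑ x : ZMod p, x ^ e = 0 := by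
    intro e he
    apply FiniteField.sum_pow_lt_card_sub_one
    rw [ZMod.card]
    omega
  calc ∑ x : ZMod p, ((a : ZMod p) + x) ^ m * ((b : ZMod p) + x) ^ r
      = ∑ x : ZMod p, ∑ j ∈ Finset.range (m + 1), ∑ l ∈ Finset.range (r + 1),
          ((a : ZMod p) ^ j * (m.choose j) * ((b : ZMod p) ^ l * (r.choose l)))
            * x ^ ((m - j) + (r - l)) := by
        refine Finset.sum_congr rfl fun x _ => ?_
        rw [add_pow, add_pow, Finset.sum_mul_sum]
        refine Finset.sum_congr rfl fun j _ => Finset.sum_congr rfl fun l _ => ?_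
        rw [pow_add]
        ring
    _ = ∑ j ∈ Finset.range (m + 1), ∑ l ∈ Finset.range (r + 1),
          ((a : ZMod p) ^ j * (m.choose j) * ((b : ZMod p) ^ l * (r.choose l)))
            * ∑ x : ZMod p, x ^ ((m - j) + (r - l)) := by
        rw [Finset.sum_comm]
        refine Finset.sum_congr rfl fun j _ => ?_
        rw [Finset.sum_comm]
        refine Finset.sum_congr rfl fun l _ => ?_
        rw [Finset.mul_sum]
    _ = 0 := by
        refine Finset.sum_eq_zero fun j _ => Finset.sum_eq_zero fun l _ => ?_
        rw [key _ (by omega), mul_zero]
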